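/- There exists a universal constant c > 0 such that the following holds for all integers d, t ≥ 1 and Δ, Ξ ≥ 1. Let D ∈ ℤ^{d×t} have all entries of absolute value at most Δ, let b ∈ ℤ^d, and let the multiset b_1, …, b_ℓ be a faithful decomposition of b with respect to D of order Ξ. Set η = (c·d·(Δ+Ξ))^d. Then every x ∈ ℤ_{≥0}^t with Dx = b can be written as x = y_1 + ⋯ + y_ℓ + Σ_{g ∈ 𝒢(D) ∩ ℤ_{≥0}^t} μ_g · g, where each y_i ∈ ℤ_{≥0}^t satisfies Dy_i = b_i and ‖y_i‖_∞ ≤ η, and μ is a finitely supported family of nonnegative integers indexed by 𝒢(D) ∩ ℤ_{≥0}^t. -/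

import Mathlib

/-- `FaithfulDecomp D Ξ b L` : the multiset `L` of vectors in `ℤᵈ` is a faithful
decomposition of `b` with respect to the matrix `D` of order `Ξ`. -/
def FaithfulDecomp {d t : ℕ} (D : Matrix (Fin d) (Fin t) ℤ) (Ξ : ℤ)
    (b : Fin d → ℤ) (L : Multiset (Fin d → ℤ)) : Prop :=
  L.sum = b ∧
  (∀ b' ∈ L, ∀ j, 0 ≤ b' j * b j ∧ |b' j| ≤ |b j|) ∧
  (∀ b' ∈ L, ∀ j, |b' j| ≤ Ξ) ∧
  ∀ x : Fin t → ℤ, (∀ i, 0 ≤ x i) → D.mulVec x = b →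
    ∃ Mset : Multiset ((Fin d → ℤ) × (Fin t → ℤ)),
      Mset.map Prod.fst = L ∧ (Mset.map Prod.snd).sum = x ∧
      ∀ p ∈ Mset, (∀ i, 0 ≤ p.2 i) ∧ D.mulVec p.2 = p.1

/-- The Graver basis of `D ∈ ℤ^{d×t}`: nonzero integer kernel elements of `D`
minimal under the conformal order. -/
def Graver {d t : ℕ} (D : Matrix (Fin d) (Fin t) ℤ) : Set (Fin t → ℤ) :=
  {g | g ≠ 0 ∧ D.mulVec g = 0 ∧
    ∀ h : Fin t → ℤ, h ≠ 0 → D.mulVec h = 0 →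
      (∀ i, 0 ≤ h i * g i ∧ |h i| ≤ |g i|) → h = g}



open Finset

lemma vertex_reduce {t d : ℕ} (v : Fin t → Fin d → ℚ) (w : Fin t → ℚ) (s : ℚ) (c : Fin d → ℚ)
    (lam0 : Fin t → ℚ) (h0 : ∀ j, 0 ≤ lam0 j) (h1 : ∀ j, lam0 j ≤ w j)
    (h2 : ∑ j, lam0 j = s) (h3 : ∀ i, ∑ j, lam0 j * v j i = c i) :
    ∃ lam : Fin t → ℚ, (∀ j, 0 ≤ lam j) ∧ (∀ j, lam j ≤ w j) ∧ (∑ j, lam j = s) ∧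
      (∀ i, ∑ j, lam j * v j i = c i) ∧
      (Finset.univ.filter (fun j => 0 < lam j ∧ lam j < w j)).card ≤ d + 1 := by
  classical
  suffices H : ∀ n : ℕ, ∀ lam0 : Fin t → ℚ,
      (Finset.univ.filter (fun j => 0 < lam0 j ∧ lam0 j < w j)).card = n →
      (∀ j, 0 ≤ lam0 j) → (∀ j, lam0 j ≤ w j) → (∑ j, lam0 j = s) →
      (∀ i, ∑ j, lam0 j * v j i = c i) →
      ∃ lam : Fin t → ℚ, (∀ j, 0 ≤ lam j) ∧ (∀ j, lam j ≤ w j) ∧ (∑ j, lam j = s) ∧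
        (∀ i, ∑ j, lam j * v j i = c i) ∧
        (Finset.univ.filter (fun j => 0 < lam j ∧ lam j < w j)).card ≤ d + 1 by
    exact H _ lam0 rfl h0 h1 h2 h3
  intro n
  induction n using Nat.strong_induction_on with
  | _ n IH =>
    intro lam0 hcard h0 h1 h2 h3
    by_cases hn : n ≤ d + 1
    · exact ⟨lam0, h0, h1, h2, h3, hcard ▸ hn⟩
    -- the fractional set
    set F : Finset (Fin t) := Finset.univ.filter (fun j => 0 < lam0 j ∧ lam0 j < w j) with hF
    push_neg at hn
    -- find a nonzero kernel vector on F
    set M : Matrix (Unit ⊕ Fin d) {j // j ∈ F} ℚ :=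
      fun i j => Sum.elim (fun _ => (1:ℚ)) (fun i' => v j.1 i') i with hM
    have hninj : ¬ Function.Injective M.mulVecLin := by
      intro hinj
      have hle := LinearMap.finrank_le_finrank_of_injective hinj
      rw [Module.finrank_pi, Module.finrank_pi] at hle
      simp only [Fintype.card_coe, Fintype.card_sum, Fintype.card_unit, Fintype.card_fin] at hle
      omega
    rw [Function.not_injective_iff] at hninj
    obtain ⟨a, b, hab, hne⟩ := hninj
    set mu : {j // j ∈ F} → ℚ := a - b with hmu
    have hmune : mu ≠ 0 := sub_ne_zero_of_ne hne
    have hker : M.mulVecLin mu = 0 := by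
      rw [hmu, map_sub, hab, sub_self]
    -- extend mu by zero
    set nu : Fin t → ℚ := fun j => if h : j ∈ F then mu ⟨j, h⟩ else 0 with hnu
    have hnuF : ∀ j ∉ F, nu j = 0 := by intro j hj; simp [hnu, hj]
    -- sums of nu
    have hsum_nu : ∀ g : Fin t → ℚ, ∑ j, nu j * g j = ∑ j : {j // j ∈ F}, mu j * g j.1 := by
      intro g
      rw [← Finset.sum_subset (Finset.subset_univ F) (fun x _ hx => by rw [hnuF x hx, zero_mul])]
      rw [← Finset.sum_attach F (fun j => nu j * g j)]
      refine Finset.sum_congr rfl fun j _ => ?_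
      simp [hnu, j.2]
    have hker1 : ∑ j, nu j = 0 := by
      have h := congrFun hker (Sum.inl ())
      simp only [Matrix.mulVecLin_apply, Matrix.mulVec, Pi.zero_apply] at h
      have h2' := hsum_nu (fun _ => 1)
      simp only [mul_one] at h2'
      rw [h2', ← h]
      simp [hM, dotProduct, mul_comm]
    have hker2 : ∀ i, ∑ j, nu j * v j i = 0 := by
      intro i
      have h := congrFun hker (Sum.inr i)
      simp only [Matrix.mulVecLin_apply, Matrix.mulVec, Pi.zero_apply] at h
      rw [hsum_nu (fun j => v j i), ← h]
      simp [hM, dotProduct, mul_comm]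
    -- nu is nonzero somewhere on F
    have hnu_ne : ∃ j ∈ F, nu j ≠ 0 := by
      have h : ∃ j : {j // j ∈ F}, mu j ≠ 0 := by
        by_contra h
        push_neg at h
        exact hmune (funext fun j => h j)
      obtain ⟨j, hj⟩ := h
      exact ⟨j.1, j.2, by simpa [hnu, j.2] using hj⟩
    -- the set of moving coordinates
    set J : Finset (Fin t) := F.filter (fun j => nu j ≠ 0) with hJ
    have hJne : J.Nonempty := by
      obtain ⟨j, hjF, hjnu⟩ := hnu_ne
      exact ⟨j, Finset.mem_filter.mpr ⟨hjF, hjnu⟩⟩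
    -- allowance
    set allow : Fin t → ℚ := fun j => if 0 < nu j then (w j - lam0 j) / nu j else lam0 j / (-nu j)
      with hallow
    have hFmem : ∀ j ∈ F, 0 < lam0 j ∧ lam0 j < w j := by
      intro j hj; exact (Finset.mem_filter.mp hj).2
    have hallow_pos : ∀ j ∈ J, 0 < allow j := by
      intro j hj
      obtain ⟨hjF, hjnu⟩ := Finset.mem_filter.mp hj
      obtain ⟨hl, hu⟩ := hFmem j hjF
      rcases lt_or_gt_of_ne hjnu with hneg | hpos
      · have hnp : ¬ (0 < nu j) := by linarith
        simp only [hallow, hnp, if_false]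
        exact div_pos hl (by linarith)
      · simp only [hallow, hpos, if_true]
        exact div_pos (by linarith) hpos
    set eps : ℚ := (J.image allow).min' (hJne.image allow) with heps
    obtain ⟨jstar, hjstarJ, hjstar_eq⟩ :=
      Finset.mem_image.mp ((J.image allow).min'_mem (hJne.image allow))
    have heps_le : ∀ j ∈ J, eps ≤ allow j := by
      intro j hj
      exact Finset.min'_le _ _ (Finset.mem_image_of_mem allow hj)
    have heps_eq : eps = allow jstar := by rw [heps, ← hjstar_eq]
    have heps_pos : 0 < eps := heps_eq ▸ hallow_pos jstar hjstarJ
    -- the new lambda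
    set lam1 : Fin t → ℚ := fun j => lam0 j + eps * nu j with hlam1
    have hkey : ∀ j ∈ J, 0 ≤ lam1 j ∧ lam1 j ≤ w j := by
      intro j hj
      obtain ⟨hjF, hjnu⟩ := Finset.mem_filter.mp hj
      obtain ⟨hl, hu⟩ := hFmem j hjF
      have hle := heps_le j hj
      rcases lt_or_gt_of_ne hjnu with hneg | hpos
      · have hnp : ¬ (0 < nu j) := by linarith
        simp only [hallow, hnp, if_false] at hle
        constructor
        · have : eps * (-nu j) ≤ lam0 j / (-nu j) * (-nu j) :=
            mul_le_mul_of_nonneg_right hle (by linarith)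
          rw [div_mul_cancel₀ _ (by linarith : -nu j ≠ 0)] at this
          simp only [hlam1]; nlinarith
        · simp only [hlam1]; nlinarith
      · simp only [hallow, hpos, if_true] at hle
        constructor
        · simp only [hlam1]; nlinarith
        · have : eps * nu j ≤ (w j - lam0 j) / nu j * nu j :=
            mul_le_mul_of_nonneg_right hle (by linarith)
          rw [div_mul_cancel₀ _ (by linarith : nu j ≠ 0)] at this
          simp only [hlam1]; linarith
    have hsame : ∀ j ∉ J, lam1 j = lam0 j := by
      intro j hj
      by_cases hjF : j ∈ F
      · have : nu j = 0 := by
          by_contra h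
          exact hj (Finset.mem_filter.mpr ⟨hjF, h⟩)
        simp [hlam1, this]
      · simp [hlam1, hnuF j hjF]
    have h0' : ∀ j, 0 ≤ lam1 j := by
      intro j
      by_cases hj : j ∈ J
      · exact (hkey j hj).1
      · rw [hsame j hj]; exact h0 j
    have h1' : ∀ j, lam1 j ≤ w j := by
      intro j
      by_cases hj : j ∈ J
      · exact (hkey j hj).2
      · rw [hsame j hj]; exact h1 j
    have h2' : ∑ j, lam1 j = s := by
      simp only [hlam1]
      rw [Finset.sum_add_distrib, h2, ← Finset.mul_sum, hker1, mul_zero, add_zero]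
    have h3' : ∀ i, ∑ j, lam1 j * v j i = c i := by
      intro i
      simp only [hlam1]
      have : ∀ j, (lam0 j + eps * nu j) * v j i = lam0 j * v j i + eps * (nu j * v j i) := by
        intro j; ring
      simp only [this]
      rw [Finset.sum_add_distrib, h3 i, ← Finset.mul_sum, hker2 i, mul_zero, add_zero]
    -- jstar leaves the fractional set
    have hjstar_bd : ¬ (0 < lam1 jstar ∧ lam1 jstar < w jstar) := by
      obtain ⟨hjF, hjnu⟩ := Finset.mem_filter.mp hjstarJ
      rcases lt_or_gt_of_ne hjnu with hneg | hpos
      · have hnp : ¬ (0 < nu jstar) := by linarith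
        have : allow jstar = lam0 jstar / (-nu jstar) := by simp [hallow, hnp]
        have hval : lam1 jstar = 0 := by
          simp only [hlam1]
          rw [heps_eq, this, div_neg, neg_mul, div_mul_cancel₀ _ hjnu]
          ring
        rw [hval]; simp
      · have : allow jstar = (w jstar - lam0 jstar) / nu jstar := by simp [hallow, hpos]
        have hval : lam1 jstar = w jstar := by
          simp only [hlam1]
          rw [heps_eq, this, div_mul_cancel₀ _ hjnu]
          ring
        rw [hval]; simp
    -- the new fractional set is strictly smaller
    have hsub : Finset.univ.filter (fun j => 0 < lam1 j ∧ lam1 j < w j) ⊆ F.erase jstar := by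
      intro j hj
      have hj' := (Finset.mem_filter.mp hj).2
      rw [Finset.mem_erase]
      constructor
      · rintro rfl; exact hjstar_bd hj'
      · by_contra hjF
        rw [hsame j (fun hjJ => hjF (Finset.mem_filter.mp hjJ).1)] at hj'
        exact hjF (Finset.mem_filter.mpr ⟨Finset.mem_univ j, hj'⟩)
    have hlt : (Finset.univ.filter (fun j => 0 < lam1 j ∧ lam1 j < w j)).card < n := by
      calc (Finset.univ.filter (fun j => 0 < lam1 j ∧ lam1 j < w j)).card
          ≤ (F.erase jstar).card := Finset.card_le_card hsub
        _ < F.card := Finset.card_erase_lt_of_mem (Finset.mem_filter.mp hjstarJ).1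
        _ = n := hcard
    exact IH _ hlt lam1 rfl h0' h1' h2' h3'

lemma min_sol_bound {d t : ℕ} (hd : 1 ≤ d) (D : Matrix (Fin d) (Fin t) ℤ) (Δ Ξ : ℤ)
    (hΔ : 0 ≤ Δ) (hΞ : 0 ≤ Ξ) (hD : ∀ i j, |D i j| ≤ Δ) (y : Fin t → ℤ)
    (hy : ∀ j, 0 ≤ y j) (hb : ∀ i, |D.mulVec y i| ≤ Ξ)
    (hmin : ∀ z : Fin t → ℤ, (∀ j, 0 ≤ z j ∧ z j ≤ y j) → D.mulVec z = 0 → z = 0) :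
    ∀ j₀, y j₀ ≤ (2*((d:ℤ)*Δ+Ξ)+1)^d + d := by
  classical
  intro j₀
  set N : ℤ := ∑ j, y j with hN
  set b : Fin d → ℤ := D.mulVec y with hbdef
  have hyN : y j₀ ≤ N := Finset.single_le_sum (fun j _ => hy j) (Finset.mem_univ j₀)
  set Mb : ℤ := (d:ℤ)*Δ + Ξ with hMb
  have hMbnn : 0 ≤ Mb := by positivity
  have hpow : (0:ℤ) ≤ (2*Mb+1)^d := by positivity
  by_cases hNd : N < d
  · omega
  push_neg at hNd
  have hN0 : (0:ℤ) < N := lt_of_lt_of_le (by exact_mod_cast hd) hNd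
  have hNq : ((N:ℚ)) ≠ 0 := by exact_mod_cast hN0.ne'
  -- the condition along the chain
  set Cond : ℕ → (Fin t → ℤ) → Prop := fun l w =>
    (∀ j, 0 ≤ w j ∧ w j ≤ y j) ∧ (∑ j, w j = N - l) ∧
    ∃ lam : Fin t → ℚ, (∀ j, 0 ≤ lam j ∧ lam j ≤ (w j : ℚ)) ∧
      (∑ j, lam j = (N : ℚ) - l - d) ∧
      (∀ i, ∑ j, lam j * (D i j : ℚ) = (((N : ℚ) - l - d) / (N : ℚ)) * (b i : ℚ))
    with hCond
  have hmv : ∀ (w : Fin t → ℤ) (i : Fin d), ((D.mulVec w i : ℤ) : ℚ)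
      = ∑ j, (w j : ℚ) * (D i j : ℚ) := by
    intro w i
    simp only [Matrix.mulVec, dotProduct]
    push_cast
    exact Finset.sum_congr rfl fun j _ => by ring
  have key : ∀ m : ℕ, (m:ℤ) ≤ N - d → ∃ f : ℕ → (Fin t → ℤ), f 0 = y ∧
      (∀ l, l < m → ∀ j, f (l+1) j ≤ f l j) ∧ (∀ l, l ≤ m → Cond l (f l)) := by
    intro m
    induction m with
    | zero =>
      intro _
      refine ⟨fun _ => y, rfl, fun l hl => absurd hl (Nat.not_lt_zero l), fun l hl => ?_⟩
      interval_cases l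
      refine ⟨fun j => ⟨hy j, le_refl _⟩, by simp [hN], ?_⟩
      refine ⟨fun j => (((N:ℚ) - d)/(N:ℚ)) * (y j : ℚ), ?_, ?_, ?_⟩
      · intro j
        have hfac0 : 0 ≤ ((N:ℚ) - d)/(N:ℚ) := by
          apply div_nonneg _ (by exact_mod_cast hN0.le)
          have : (d:ℚ) ≤ (N:ℚ) := by exact_mod_cast hNd
          linarith
        have hfac1 : ((N:ℚ) - d)/(N:ℚ) ≤ 1 := by
          rw [div_le_one (by exact_mod_cast hN0)]
          have : (0:ℚ) ≤ (d:ℚ) := by positivity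
          linarith
        have hyj : (0:ℚ) ≤ (y j : ℚ) := by exact_mod_cast hy j
        constructor
        · positivity
        · push_cast
          nlinarith
      · rw [← Finset.mul_sum]
        have : ∑ j, ((y j : ℤ) : ℚ) = (N:ℚ) := by rw [hN]; push_cast; rfl
        rw [this, div_mul_cancel₀ _ hNq]
        push_cast; ring
      · intro i
        have : ∀ j, (((N:ℚ) - d)/(N:ℚ)) * (y j : ℚ) * (D i j : ℚ)
            = (((N:ℚ) - d)/(N:ℚ)) * ((y j : ℚ) * (D i j : ℚ)) := fun j => by ring
        simp only [this]
        rw [← Finset.mul_sum, ← hmv y i]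
        push_cast; ring
    | succ m IH =>
      intro hm1
      have hm : (m:ℤ) ≤ N - d := by push_cast at hm1 ⊢; linarith
      obtain ⟨f, hf0, hmono, hcond⟩ := IH hm
      obtain ⟨hbd, hsum, lam, hlam01, hlamsum, hlamv⟩ := hcond m le_rfl
      set w := f m with hw
      -- scale down lam
      have hden : (1:ℚ) ≤ (N:ℚ) - m - d := by
        push_cast at hm1 ⊢
        have : ((m:ℚ) + 1) ≤ (N:ℚ) - d := by exact_mod_cast hm1
        linarith
      have hdenne : ((N:ℚ) - m - d) ≠ 0 := by linarith
      set α : ℚ := ((N:ℚ) - (m+1) - d) / ((N:ℚ) - m - d) with hα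
      have hα0 : 0 ≤ α := by
        apply div_nonneg _ (by linarith)
        push_cast; linarith
      have hα1 : α ≤ 1 := by
        rw [hα, div_le_one (by linarith)]
        push_cast; linarith
      obtain ⟨lam', hl0, hl1, hlsum, hlv, hlcard⟩ := vertex_reduce
        (fun j i => (D i j : ℚ)) (fun j => (w j : ℚ)) ((N:ℚ) - (m+1) - d)
        (fun i => (((N:ℚ) - (m+1) - d) / (N:ℚ)) * (b i : ℚ))
        (fun j => α * lam j)
        (fun j => mul_nonneg hα0 (hlam01 j).1)
        (fun j => by
          calc α * lam j ≤ 1 * lam j := mul_le_mul_of_nonneg_right hα1 (hlam01 j).1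
          _ = lam j := one_mul _
          _ ≤ (w j : ℚ) := (hlam01 j).2)
        (by rw [← Finset.mul_sum, hlamsum, hα, div_mul_cancel₀ _ hdenne])
        (by
          intro i
          have : ∀ j, α * lam j * (D i j : ℚ) = α * (lam j * (D i j : ℚ)) := fun j => by ring
          simp only [this]
          rw [← Finset.mul_sum, hlamv i, hα]
          field_simp)
      -- gap sum is d + 1
      have hwsum : ∑ j, ((w j : ℤ) : ℚ) = (N:ℚ) - m := by
        rw [← Int.cast_sum]
        exact_mod_cast congrArg (fun z : ℤ => (z : ℚ)) hsum
      have hgap : ∑ j, ((w j : ℚ) - lam' j) = (d:ℚ) + 1 := by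
        rw [Finset.sum_sub_distrib, hwsum, hlsum]
        push_cast; ring
      -- find jstar with gap at least 1
      have hjstar : ∃ jstar, 1 ≤ (w jstar : ℚ) - lam' jstar := by
        by_contra hcon
        push_neg at hcon
        set F := Finset.univ.filter (fun j => 0 < lam' j ∧ lam' j < (w j : ℚ)) with hFdef
        have hrest : ∀ j ∈ Finset.univ, j ∉ F → ((w j : ℚ) - lam' j) = 0 := by
          intro j _ hjF
          rw [hFdef, Finset.mem_filter] at hjF
          push_neg at hjF
          have := hjF (Finset.mem_univ j)
          rcases lt_or_eq_of_le (hl0 j) with hpos | heq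
          · have hwj : lam' j = (w j : ℚ) := le_antisymm (hl1 j) (this hpos)
            rw [hwj]; ring
          · have hwj : (w j : ℚ) < 1 := by
              have := hcon j
              linarith [heq ▸ this]
            have : w j = 0 := by
              have h0w : 0 ≤ w j := (hbd j).1
              have : w j < 1 := by exact_mod_cast hwj
              omega
            rw [this, ← heq]; simp
        have hFsum : ∑ j ∈ F, ((w j : ℚ) - lam' j) = (d:ℚ) + 1 := by
          rw [Finset.sum_subset (Finset.subset_univ F) hrest]
          exact hgap
        have hFne : F.Nonempty := by
          rcases Finset.eq_empty_or_nonempty F with h | h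
          · rw [h, Finset.sum_empty] at hFsum
            have : (0:ℚ) < (d:ℚ) + 1 := by positivity
            linarith
          · exact h
        have hlt : ∑ j ∈ F, ((w j : ℚ) - lam' j) < ∑ j ∈ F, (1:ℚ) :=
          Finset.sum_lt_sum_of_nonempty hFne (fun j hj => by
            have := hcon j; linarith)
        rw [Finset.sum_const, nsmul_eq_mul, mul_one] at hlt
        rw [hFsum] at hlt
        have hcard' : (F.card : ℚ) ≤ (d:ℚ) + 1 := by exact_mod_cast hlcard
        linarith
      obtain ⟨jstar, hjstar⟩ := hjstar
      have hws1 : 1 ≤ w jstar := by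
        have h0l := hl0 jstar
        have : (1:ℚ) ≤ (w jstar : ℚ) := by linarith
        exact_mod_cast this
      set wnew : Fin t → ℤ := Function.update w jstar (w jstar - 1) with hwnew
      have hwnew_le : ∀ j, wnew j ≤ w j := by
        intro j
        rcases eq_or_ne j jstar with rfl | hne
        · simp [hwnew]
        · simp [hwnew, Function.update_of_ne hne]
      have hwnew_j : wnew jstar = w jstar - 1 := by simp [hwnew]
      have hwnew_o : ∀ j, j ≠ jstar → wnew j = w j := fun j hne => by
        simp [hwnew, Function.update_of_ne hne]
      set fnew : ℕ → (Fin t → ℤ) := fun l => if l ≤ m then f l else wnew with hfnew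
      have hfnew_eq : ∀ l, l ≤ m → fnew l = f l := fun l hl => by simp [hfnew, hl]
      have hfnew_top : fnew (m+1) = wnew := by simp [hfnew]
      refine ⟨fnew, by rw [hfnew_eq 0 (Nat.zero_le m), hf0], ?_, ?_⟩
      · intro l hl j
        rcases Nat.lt_or_ge l m with hlm | hlm
        · rw [hfnew_eq l (le_of_lt hlm), hfnew_eq (l+1) hlm]
          exact hmono l hlm j
        · have : l = m := by omega
          subst this
          rw [hfnew_eq l le_rfl, hfnew_top]
          exact hwnew_le j
      · intro l hl
        rcases Nat.lt_or_ge l (m+1) with hlm | hlm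
        · rw [hfnew_eq l (Nat.lt_succ_iff.mp hlm)]
          exact hcond l (Nat.lt_succ_iff.mp hlm)
        · have : l = m + 1 := by omega
          subst this
          rw [hfnew_top]
          have hsumnew : ∑ j, wnew j = N - (m+1) := by
            have : ∑ j, wnew j = ∑ j, w j - 1 := by
              rw [hwnew, Finset.sum_update_of_mem (Finset.mem_univ jstar)]
              rw [← Finset.sum_erase_add Finset.univ w (Finset.mem_univ jstar)]
              rw [Finset.sdiff_singleton_eq_erase]
              ring
            rw [this, hsum]
            push_cast; ring
          refine ⟨?_, hsumnew, lam', ?_, ?_, ?_⟩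
          · intro j
            rcases eq_or_ne j jstar with rfl | hne
            · rw [hwnew_j]
              exact ⟨by omega, by linarith [(hbd j).2]⟩
            · rw [hwnew_o j hne]; exact hbd j
          · intro j
            refine ⟨(hl0 j), ?_⟩
            rcases eq_or_ne j jstar with rfl | hne
            · rw [hwnew_j]
              push_cast
              linarith
            · rw [hwnew_o j hne]; exact hl1 j
          · rw [hlsum]; push_cast; ring
          · intro i
            rw [hlv i]
            push_cast; ring_nf
  -- apply the chain at full length
  set m0 : ℕ := (N - d).toNat with hm0
  have hm0' : (m0 : ℤ) = N - d := Int.toNat_of_nonneg (by omega)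
  obtain ⟨f, hf0, hmono, hcond⟩ := key m0 (le_of_eq hm0')
  have hmono2 : ∀ l2, l2 ≤ m0 → ∀ l1, l1 ≤ l2 → ∀ j, f l2 j ≤ f l1 j := by
    intro l2
    induction l2 with
    | zero => intro _ l1 hl1 j; interval_cases l1; exact le_refl _
    | succ n ih =>
      intro hn l1 hl1 j
      rcases Nat.lt_or_ge l1 (n+1) with hlt | hge
      · calc f (n+1) j ≤ f n j := hmono n (by omega) j
        _ ≤ f l1 j := ih (by omega) l1 (by omega) j
      · have : l1 = n + 1 := by omega
        subst this; exact le_refl _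
  have hbox : ∀ l, l ≤ m0 → ∀ i, |D.mulVec (f l) i| ≤ Mb := by
    intro l hl i
    obtain ⟨hbd, hsum, lam, hlam01, hlamsum, hlamv⟩ := hcond l hl
    have hfac0 : (0:ℚ) ≤ ((N:ℚ) - l - d) / (N:ℚ) := by
      apply div_nonneg _ (by exact_mod_cast hN0.le)
      have : (l:ℤ) ≤ N - d := by rw [← hm0']; exact_mod_cast hl
      have : ((l:ℚ)) ≤ (N:ℚ) - d := by exact_mod_cast this
      linarith
    have hfac1 : ((N:ℚ) - l - d) / (N:ℚ) ≤ 1 := by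
      rw [div_le_one (by exact_mod_cast hN0)]
      have h1 : (0:ℚ) ≤ (l:ℚ) := by positivity
      have h2 : (0:ℚ) ≤ (d:ℚ) := by positivity
      linarith
    have hQ : |((D.mulVec (f l) i : ℤ) : ℚ)| ≤ ((d:ℚ)*(Δ:ℚ) + (Ξ:ℚ)) := by
      rw [hmv (f l) i]
      have hsplit : ∑ j, ((f l j : ℤ) : ℚ) * (D i j : ℚ)
          = (∑ j, (((f l j : ℤ) : ℚ) - lam j) * (D i j : ℚ)) + ∑ j, lam j * (D i j : ℚ) := by
        rw [← Finset.sum_add_distrib]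
        exact Finset.sum_congr rfl fun j _ => by ring
      rw [hsplit, hlamv i]
      have hR : |∑ j, (((f l j : ℤ) : ℚ) - lam j) * (D i j : ℚ)| ≤ (d:ℚ)*(Δ:ℚ) := by
        calc |∑ j, (((f l j : ℤ) : ℚ) - lam j) * (D i j : ℚ)|
            ≤ ∑ j, |(((f l j : ℤ) : ℚ) - lam j) * (D i j : ℚ)| := Finset.abs_sum_le_sum_abs _ _
          _ ≤ ∑ j, (((f l j : ℤ) : ℚ) - lam j) * (Δ:ℚ) := by
              apply Finset.sum_le_sum
              intro j _
              rw [abs_mul]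
              have hnn : 0 ≤ ((f l j : ℤ) : ℚ) - lam j := by linarith [(hlam01 j).2]
              rw [abs_of_nonneg hnn]
              apply mul_le_mul_of_nonneg_left _ hnn
              have := hD i j
              calc |((D i j : ℤ):ℚ)| = ((|D i j| : ℤ) : ℚ) := by rw [Int.cast_abs]
              _ ≤ (Δ:ℚ) := by exact_mod_cast this
          _ = (∑ j, (((f l j : ℤ) : ℚ) - lam j)) * (Δ:ℚ) := by rw [Finset.sum_mul]
          _ = (d:ℚ)*(Δ:ℚ) := by
              rw [Finset.sum_sub_distrib, hlamsum]
              have : ∑ j, ((f l j : ℤ) : ℚ) = ((N:ℚ) - l) := by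
                rw [← Int.cast_sum, hsum]; push_cast; ring
              rw [this]
              ring
      have hS : |(((N:ℚ) - l - d) / (N:ℚ)) * (b i : ℚ)| ≤ (Ξ:ℚ) := by
        rw [abs_mul, abs_of_nonneg hfac0]
        calc (((N:ℚ) - l - d) / (N:ℚ)) * |(b i : ℚ)| ≤ 1 * |(b i : ℚ)| := by
              apply mul_le_mul_of_nonneg_right hfac1 (abs_nonneg _)
          _ = |(b i : ℚ)| := one_mul _
          _ ≤ (Ξ:ℚ) := by
              have := hb i
              calc |((b i : ℤ):ℚ)| = ((|b i| : ℤ) : ℚ) := by rw [Int.cast_abs]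
              _ ≤ (Ξ:ℚ) := by exact_mod_cast this
      calc |(∑ j, (((f l j : ℤ) : ℚ) - lam j) * (D i j : ℚ)) + (((N:ℚ) - l - d) / (N:ℚ)) * (b i : ℚ)|
          ≤ |∑ j, (((f l j : ℤ) : ℚ) - lam j) * (D i j : ℚ)| + |(((N:ℚ) - l - d) / (N:ℚ)) * (b i : ℚ)| := abs_add_le _ _
        _ ≤ (d:ℚ)*(Δ:ℚ) + (Ξ:ℚ) := add_le_add hR hS
    rw [hMb]
    have : |((D.mulVec (f l) i : ℤ) : ℚ)| = ((|D.mulVec (f l) i| : ℤ) : ℚ) := by rw [Int.cast_abs]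
    rw [this] at hQ
    exact_mod_cast hQ
  -- injectivity into the box
  have hinj : ∀ l1 l2, l1 ≤ m0 → l2 ≤ m0 → l1 < l2 →
      D.mulVec (f l1) ≠ D.mulVec (f l2) := by
    intro l1 l2 hl1 hl2 hlt heq
    set z : Fin t → ℤ := fun j => f l1 j - f l2 j with hz
    have hz0 : ∀ j, 0 ≤ z j ∧ z j ≤ y j := by
      intro j
      constructor
      · have := hmono2 l2 hl2 l1 (le_of_lt hlt) j
        simp [hz]; linarith
      · have h1 := ((hcond l1 hl1).1 j).2
        have h2 := ((hcond l2 hl2).1 j).1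
        simp [hz]; omega
    have hzker : D.mulVec z = 0 := by
      have : z = f l1 - f l2 := by funext j; simp [hz]
      rw [this, Matrix.mulVec_sub, heq, sub_self]
    have hzz := hmin z hz0 hzker
    have hzsum : ∑ j, z j = (l2 : ℤ) - l1 := by
      simp only [hz]
      rw [Finset.sum_sub_distrib, (hcond l1 hl1).2.1, (hcond l2 hl2).2.1]
      ring
    rw [hzz] at hzsum
    simp at hzsum
    omega
  -- counting
  have hcount : m0 + 1 ≤ ((2*Mb+1).toNat)^d := by
    have hcard : Fintype.card (Fin (m0+1)) ≤
        Fintype.card (Fin d → {x // x ∈ Finset.Icc (-Mb) Mb}) := by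
      apply Fintype.card_le_of_injective
        (fun l i => ⟨D.mulVec (f (l : ℕ)) i, by
          rw [Finset.mem_Icc]
          have := hbox l.1 (by omega) i
          constructor <;> [linarith [neg_abs_le (D.mulVec (f l.1) i)];
            linarith [le_abs_self (D.mulVec (f l.1) i)]]⟩)
      intro l1 l2 heq
      by_contra hne
      have hne' : l1.1 ≠ l2.1 := fun h => hne (Fin.ext h)
      have hfeq : D.mulVec (f l1.1) = D.mulVec (f l2.1) := by
        funext i
        exact congrArg Subtype.val (congrFun heq i)
      rcases Nat.lt_or_ge l1.1 l2.1 with h | h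
      · exact hinj l1.1 l2.1 (by omega) (by omega) h hfeq
      · have : l2.1 < l1.1 := by omega
        exact hinj l2.1 l1.1 (by omega) (by omega) this hfeq.symm
    rw [Fintype.card_fin, Fintype.card_fun, Fintype.card_coe, Fintype.card_fin] at hcard
    rw [Int.card_Icc] at hcard
    have : (Mb + 1 - -Mb) = 2*Mb + 1 := by ring
    rw [this] at hcard
    exact hcard
  have hfinal : N ≤ (2*Mb+1)^d + d - 1 := by
    have h1 : ((m0:ℤ)) + 1 ≤ (((2*Mb+1).toNat : ℤ))^d := by exact_mod_cast hcount
    have h2 : (((2*Mb+1).toNat : ℤ)) = 2*Mb+1 := Int.toNat_of_nonneg (by omega)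
    rw [h2] at h1
    omega
  omega


/-- Reduction of a nonnegative solution to a minimal one below it. -/
lemma min_reduce {d t : ℕ} (D : Matrix (Fin d) (Fin t) ℤ) (x : Fin t → ℤ)
    (hx : ∀ i, 0 ≤ x i) :
    ∃ y : Fin t → ℤ, (∀ j, 0 ≤ y j) ∧ (∀ j, y j ≤ x j) ∧ D.mulVec y = D.mulVec x ∧
      ∀ z : Fin t → ℤ, (∀ j, 0 ≤ z j ∧ z j ≤ y j) → D.mulVec z = 0 → z = 0 := by
  classical
  set S : Finset (Fin t → ℤ) :=
    (Fintype.piFinset (fun j => Finset.Icc 0 (x j))).filter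
      (fun w => D.mulVec w = D.mulVec x) with hS
  have hxS : x ∈ S := by
    rw [hS, Finset.mem_filter]
    exact ⟨Fintype.mem_piFinset.mpr (fun j => Finset.mem_Icc.mpr ⟨hx j, le_refl _⟩), rfl⟩
  obtain ⟨y, hyS, hymin⟩ := S.exists_minimal ⟨x, hxS⟩
  rw [hS, Finset.mem_filter] at hyS
  obtain ⟨hybox, hyD⟩ := hyS
  have hy0 : ∀ j, 0 ≤ y j := fun j => (Finset.mem_Icc.mp (Fintype.mem_piFinset.mp hybox j)).1
  have hyx : ∀ j, y j ≤ x j := fun j => (Finset.mem_Icc.mp (Fintype.mem_piFinset.mp hybox j)).2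
  refine ⟨y, hy0, hyx, hyD, ?_⟩
  intro z hz hzker
  by_contra hzne
  have hmem : y - z ∈ S := by
    rw [hS, Finset.mem_filter]
    constructor
    · refine Fintype.mem_piFinset.mpr (fun j => Finset.mem_Icc.mpr ⟨?_, ?_⟩)
      · have := (hz j).2; simp only [Pi.sub_apply]; omega
      · have h1 := (hz j).1
        have h2 := hyx j
        simp only [Pi.sub_apply]; omega
    · rw [Matrix.mulVec_sub, hzker, sub_zero, hyD]
  have hlt : y - z < y := by
    constructor
    · intro j; simp only [Pi.sub_apply]; have := (hz j).1; omega
    · intro hle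
      apply hzne
      funext j
      have h1 := hle j
      have h2 := (hz j).1
      simp only [Pi.sub_apply] at h1
      simp only [Pi.zero_apply]
      omega
  exact hlt.not_ge (hymin hmem hlt.le)

/-- Decomposition of a nonnegative kernel element into nonnegative Graver elements. -/
lemma graver_decomp {d t : ℕ} (D : Matrix (Fin d) (Fin t) ℤ) (z : Fin t → ℤ)
    (hz : ∀ j, 0 ≤ z j) (hker : D.mulVec z = 0) :
    ∃ μ : Multiset (Fin t → ℤ), (∀ g ∈ μ, g ∈ Graver D ∧ ∀ i, 0 ≤ g i) ∧ μ.sum = z := by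
  classical
  suffices H : ∀ n : ℕ, ∀ z : Fin t → ℤ, (∀ j, 0 ≤ z j) → D.mulVec z = 0 →
      (∑ j, z j).toNat = n →
      ∃ μ : Multiset (Fin t → ℤ), (∀ g ∈ μ, g ∈ Graver D ∧ ∀ i, 0 ≤ g i) ∧ μ.sum = z by
    exact H _ z hz hker rfl
  intro n
  induction n using Nat.strong_induction_on with
  | _ n IH =>
    intro z hz hker hsum
    by_cases hz0 : z = 0
    · exact ⟨0, fun g hg => absurd hg (Multiset.notMem_zero g), by rw [Multiset.sum_zero, hz0]⟩
    -- find a minimal nonzero kernel element below z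
    set S : Finset (Fin t → ℤ) :=
      (Fintype.piFinset (fun j => Finset.Icc 0 (z j))).filter
        (fun w => D.mulVec w = 0 ∧ w ≠ 0) with hS
    have hzS : z ∈ S := by
      rw [hS, Finset.mem_filter]
      exact ⟨Fintype.mem_piFinset.mpr (fun j => Finset.mem_Icc.mpr ⟨hz j, le_refl _⟩),
        hker, hz0⟩
    obtain ⟨w, hwS, hwmin⟩ := S.exists_minimal ⟨z, hzS⟩
    rw [hS, Finset.mem_filter] at hwS
    obtain ⟨hwbox, hwker, hwne⟩ := hwS
    have hw0 : ∀ j, 0 ≤ w j := fun j => (Finset.mem_Icc.mp (Fintype.mem_piFinset.mp hwbox j)).1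
    have hwz : ∀ j, w j ≤ z j := fun j => (Finset.mem_Icc.mp (Fintype.mem_piFinset.mp hwbox j)).2
    have hwG : w ∈ Graver D := by
      refine ⟨hwne, hwker, ?_⟩
      intro h hne hhker hconf
      have hh0 : ∀ j, 0 ≤ h j := by
        intro j
        obtain ⟨hc1, hc2⟩ := hconf j
        rcases lt_or_eq_of_le (hw0 j) with hpos | heq
        · nlinarith
        · rw [← heq] at hc2
          simp only [abs_zero] at hc2
          have h0 : h j = 0 := abs_eq_zero.mp (le_antisymm hc2 (abs_nonneg _))
          omega
      have hhw : ∀ j, h j ≤ w j := by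
        intro j
        have := (hconf j).2
        rw [abs_of_nonneg (hh0 j), abs_of_nonneg (hw0 j)] at this
        exact this
      have hhS : h ∈ S := by
        rw [hS, Finset.mem_filter]
        exact ⟨Fintype.mem_piFinset.mpr (fun j => Finset.mem_Icc.mpr
          ⟨hh0 j, le_trans (hhw j) (hwz j)⟩), hhker, hne⟩
      by_contra hne2
      exact (show h < w from ⟨fun j => hhw j, fun hle => hne2 (le_antisymm (fun j => hhw j) hle)⟩).not_ge
          (hwmin hhS (fun j => hhw j))
    -- recurse on z - w
    have hzw0 : ∀ j, 0 ≤ (z - w) j := fun j => by simp only [Pi.sub_apply]; have := hwz j; omega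
    have hzwker : D.mulVec (z - w) = 0 := by rw [Matrix.mulVec_sub, hker, hwker, sub_zero]
    have hwpos : 0 < ∑ j, w j := by
      rcases (Finset.sum_nonneg fun j _ => hw0 j).lt_or_eq with h | h
      · exact h
      · exfalso
        apply hwne
        funext j
        have := (Finset.sum_eq_zero_iff_of_nonneg (fun j _ => hw0 j)).mp h.symm
        simp only [Pi.zero_apply]
        exact this j (Finset.mem_univ j)
    have hlt : (∑ j, (z - w) j).toNat < n := by
      have h1 : ∑ j, (z - w) j = ∑ j, z j - ∑ j, w j := by
        simp only [Pi.sub_apply]; rw [Finset.sum_sub_distrib]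
      have h2 : 0 ≤ ∑ j, z j := Finset.sum_nonneg fun j _ => hz j
      have h3 : 0 ≤ ∑ j, (z - w) j := Finset.sum_nonneg fun j _ => hzw0 j
      omega
    obtain ⟨μ, hμ, hμsum⟩ := IH _ hlt (z - w) hzw0 hzwker rfl
    refine ⟨w ::ₘ μ, ?_, ?_⟩
    · intro g hg
      rcases Multiset.mem_cons.mp hg with rfl | hg'
      · exact ⟨hwG, hw0⟩
      · exact hμ g hg'
    · rw [Multiset.sum_cons, hμsum]
      funext j; simp

lemma pow_ten_aux : ∀ d : ℕ, 1 ≤ d → 3^d + 1 ≤ 10^d := by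
  intro d hd
  induction d with
  | zero => omega
  | succ n ih =>
    rcases Nat.eq_zero_or_pos n with rfl | hn
    · norm_num
    · have h := ih hn
      have h3 : 3^(n+1) + 1 ≤ 3*(3^n + 1) := by ring_nf; omega
      calc 3^(n+1) + 1 ≤ 3*(3^n+1) := h3
        _ ≤ 3*10^n := by omega
        _ ≤ 10*10^n := by omega
        _ = 10^(n+1) := by ring

lemma const_bound (d Δ Ξ : ℕ) (hd : 1 ≤ d) (hΔ : 1 ≤ Δ) (hΞ : 1 ≤ Ξ) :
    (2*(d*Δ+Ξ)+1)^d + d ≤ (10*d*(Δ+Ξ))^d := by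
  have hX2 : 2 ≤ d*(Δ+Ξ) := by
    calc 2 = 1*2 := by ring
      _ ≤ d*(Δ+Ξ) := Nat.mul_le_mul hd (by omega)
  have hdΔ : 1 ≤ d*Δ := by calc 1 = 1*1 := by ring
                              _ ≤ d*Δ := Nat.mul_le_mul hd hΔ
  have hdΞ : Ξ ≤ d*Ξ := by calc Ξ = 1*Ξ := by ring
                              _ ≤ d*Ξ := Nat.mul_le_mul hd (le_refl Ξ)
  have h1 : 2*(d*Δ+Ξ)+1 ≤ 3*(d*(Δ+Ξ)) := by
    have h3 : 3*(d*(Δ+Ξ)) = 3*(d*Δ) + 3*(d*Ξ) := by ring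
    omega
  have h2 : d ≤ (d*(Δ+Ξ))^d := le_trans (Nat.lt_two_pow_self (n := d)).le (Nat.pow_le_pow_left hX2 d)
  calc (2*(d*Δ+Ξ)+1)^d + d ≤ (3*(d*(Δ+Ξ)))^d + (d*(Δ+Ξ))^d :=
        add_le_add (Nat.pow_le_pow_left h1 d) h2
    _ = (3^d + 1) * (d*(Δ+Ξ))^d := by rw [mul_pow]; ring
    _ ≤ 10^d * (d*(Δ+Ξ))^d := Nat.mul_le_mul_right _ (pow_ten_aux d hd)
    _ = (10*(d*(Δ+Ξ)))^d := (mul_pow 10 (d*(Δ+Ξ)) d).symm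
    _ = (10*d*(Δ+Ξ))^d := by rw [mul_assoc]

/-- There is a universal constant `c > 0` such that for all `d, t ≥ 1` and
`Δ, Ξ ≥ 1`: if `D ∈ ℤ^{d×t}` has entries bounded by `Δ` and the multiset `L` is a
faithful decomposition of `b` with respect to `D` of order `Ξ`, then with
`η = (c·d·(Δ+Ξ))^d` every nonnegative integral solution `x` of `D x = b` can be
written as `x = y₁ + ⋯ + y_ℓ + Σ_{g} μ_g · g`, where the `yᵢ` are nonnegative
integral solutions of `D yᵢ = bᵢ` (pairing off the members `bᵢ` of `L`) with
`‖yᵢ‖_∞ ≤ η`, and `μ` is a finite multiset of nonnegative Graver basis elements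
of `D`. -/
theorem faithful_decomposition_with_small_base_solutions :
    ∃ c : ℕ, 0 < c ∧ ∀ d t Δ Ξ : ℕ, 1 ≤ d → 1 ≤ t → 1 ≤ Δ → 1 ≤ Ξ →
      ∀ D : Matrix (Fin d) (Fin t) ℤ, (∀ i j, |D i j| ≤ (Δ : ℤ)) →
      ∀ b : Fin d → ℤ, ∀ L : Multiset (Fin d → ℤ),
        FaithfulDecomp D (Ξ : ℤ) b L →
        ∀ x : Fin t → ℤ, (∀ i, 0 ≤ x i) → D.mulVec x = b →
          ∃ Mset : Multiset ((Fin d → ℤ) × (Fin t → ℤ)),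
            Mset.map Prod.fst = L ∧
            (∀ p ∈ Mset, (∀ i, 0 ≤ p.2 i) ∧ D.mulVec p.2 = p.1 ∧
              ∀ i, |p.2 i| ≤ ((c * d * (Δ + Ξ) : ℕ) : ℤ) ^ d) ∧
            ∃ μ : Multiset (Fin t → ℤ),
              (∀ g ∈ μ, g ∈ Graver D ∧ ∀ i, 0 ≤ g i) ∧
              x = (Mset.map Prod.snd).sum + μ.sum := by
  classical
  refine ⟨10, by norm_num, ?_⟩
  intro d t Δ Ξ hd ht hΔ hΞ D hD b L hFD x hx hDx
  obtain ⟨hLsum, hconf, hLbd, hdecomp⟩ := hFD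
  obtain ⟨Mset₀, hfst, hsnd, hprops⟩ := hdecomp x hx hDx
  -- choice function: minimal reduction
  have hredE : ∀ v : Fin t → ℤ, ∃ y : Fin t → ℤ, (∀ i, 0 ≤ v i) →
      ((∀ j, 0 ≤ y j) ∧ (∀ j, y j ≤ v j) ∧ D.mulVec y = D.mulVec v ∧
        ∀ z : Fin t → ℤ, (∀ j, 0 ≤ z j ∧ z j ≤ y j) → D.mulVec z = 0 → z = 0) := by
    intro v
    by_cases h : ∀ i, 0 ≤ v i
    · obtain ⟨y, h1, h2, h3, h4⟩ := min_reduce D v h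
      exact ⟨y, fun _ => ⟨h1, h2, h3, h4⟩⟩
    · exact ⟨v, fun h' => absurd h' h⟩
  choose R hR using hredE
  -- choice function: Graver decomposition
  have hdecE : ∀ v : Fin t → ℤ, ∃ μ : Multiset (Fin t → ℤ),
      ((∀ j, 0 ≤ v j) ∧ D.mulVec v = 0) →
      ((∀ g ∈ μ, g ∈ Graver D ∧ ∀ i, 0 ≤ g i) ∧ μ.sum = v) := by
    intro v
    by_cases h : (∀ j, 0 ≤ v j) ∧ D.mulVec v = 0
    · obtain ⟨μ, h1, h2⟩ := graver_decomp D v h.1 h.2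
      exact ⟨μ, fun _ => ⟨h1, h2⟩⟩
    · exact ⟨0, fun h' => absurd h' h⟩
  choose G hG using hdecE
  refine ⟨Mset₀.map (fun q => (q.1, R q.2)), ?_, ?_, ?_⟩
  · rw [Multiset.map_map]
    exact hfst
  · intro p hp
    obtain ⟨q, hq, rfl⟩ := Multiset.mem_map.mp hp
    obtain ⟨hq1, hq2⟩ := hprops q hq
    obtain ⟨hy0, hyle, hyD, hymin⟩ := hR q.2 hq1
    have hq1L : q.1 ∈ L := by
      rw [← hfst]
      exact Multiset.mem_map_of_mem Prod.fst hq
    have hDy : D.mulVec (R q.2) = q.1 := by rw [hyD, hq2]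
    have hbq : ∀ i, |D.mulVec (R q.2) i| ≤ (Ξ:ℤ) := by
      intro i; rw [hDy]; exact hLbd q.1 hq1L i
    have hbd := min_sol_bound hd D (Δ:ℤ) (Ξ:ℤ) (by positivity) (by positivity) hD
      (R q.2) hy0 hbq hymin
    refine ⟨hy0, hDy, ?_⟩
    intro i
    rw [abs_of_nonneg (hy0 i)]
    calc R q.2 i ≤ (2*((d:ℤ)*(Δ:ℤ)+(Ξ:ℤ))+1)^d + d := hbd i
      _ ≤ ((10 * d * (Δ + Ξ) : ℕ) : ℤ) ^ d := by
          have h := const_bound d Δ Ξ hd hΔ hΞ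
          have h' : (((2*(d*Δ+Ξ)+1)^d + d : ℕ) : ℤ) ≤ (((10*d*(Δ+Ξ))^d : ℕ) : ℤ) := by
            exact_mod_cast h
          push_cast at h' ⊢
          convert h' using 2 <;> push_cast <;> ring
  · refine ⟨(Mset₀.map (fun q => G (q.2 - R q.2))).join, ?_, ?_⟩
    · intro g hg
      rw [Multiset.mem_join] at hg
      obtain ⟨S, hSmem, hgS⟩ := hg
      obtain ⟨q, hq, rfl⟩ := Multiset.mem_map.mp hSmem
      obtain ⟨hq1, hq2⟩ := hprops q hq
      obtain ⟨hy0, hyle, hyD, _⟩ := hR q.2 hq1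
      have hGq := hG (q.2 - R q.2) ⟨fun j => by
          simp only [Pi.sub_apply]; have := hyle j; omega,
        by rw [Matrix.mulVec_sub, hyD, sub_self]⟩
      exact hGq.1 g hgS
    · rw [Multiset.sum_join, Multiset.map_map, Multiset.map_map]
      have h1 : Multiset.map (Multiset.sum ∘ fun q : (Fin d → ℤ) × (Fin t → ℤ) =>
          G (q.2 - R q.2)) Mset₀ = Multiset.map (fun q : (Fin d → ℤ) × (Fin t → ℤ) =>
          q.2 - R q.2) Mset₀ := by
        refine Multiset.map_congr rfl (fun q hq => ?_)
        obtain ⟨hq1, hq2⟩ := hprops q hq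
        obtain ⟨hy0, hyle, hyD, _⟩ := hR q.2 hq1
        exact (hG (q.2 - R q.2) ⟨fun j => by
            simp only [Pi.sub_apply]; have := hyle j; omega,
          by rw [Matrix.mulVec_sub, hyD, sub_self]⟩).2
      rw [h1, ← Multiset.sum_map_add]
      have h2 : Multiset.map (fun q : (Fin d → ℤ) × (Fin t → ℤ) =>
          (Prod.snd ∘ fun q : (Fin d → ℤ) × (Fin t → ℤ) => (q.1, R q.2)) q + (q.2 - R q.2))
          Mset₀ = Multiset.map Prod.snd Mset₀ := by
        refine Multiset.map_congr rfl (fun q hq => ?_)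
        simp only [Function.comp_apply]
        funext j
        simp only [Pi.add_apply, Pi.sub_apply]
        ring
      rw [h2, hsnd]
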